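/- Let K be a nonempty compact subset of ℝ^d, let E be a compact subset of K and let α > 0. Assume P^α(E) < +∞. Then there exists a measure μ ∈ P(K) such that for every x ∈ E, the upper local dimension dim_loc^+(μ;x) is at most α. -/

import Mathlib

open MeasureTheory Filter Metric Set Topology
open scoped ENNReal

/-- The `δ`-packing premeasure in dimension `s`: the supremum of `∑ (2 rᵢ)^s` over all
countable packings of `E` by pairwise disjoint closed balls centered in `E`
with radii in `(0, δ]`. -/
noncomputable def packingPre {X : Type*} [MetricSpace X] (s : ℝ) (δ : ℝ) (E : Set X) : ℝ≥0∞ :=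
  ⨆ (P : Set (X × ℝ)) (_ : P.Countable)
    (_ : ∀ p ∈ P, p.1 ∈ E ∧ 0 < p.2 ∧ p.2 ≤ δ)
    (_ : P.PairwiseDisjoint fun p => Metric.closedBall p.1 p.2),
    ∑' p : P, ENNReal.ofReal ((2 * (p : X × ℝ).2) ^ s)

/-- The packing premeasure in dimension `s`. -/
noncomputable def packingPre0 {X : Type*} [MetricSpace X] (s : ℝ) (E : Set X) : ℝ≥0∞ :=
  ⨅ (δ : ℝ) (_ : 0 < δ), packingPre s δ E

/-- The `s`-dimensional packing measure. -/
noncomputable def packingMeasure {X : Type*} [MetricSpace X] (s : ℝ) (E : Set X) : ℝ≥0∞ :=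
  ⨅ (F : ℕ → Set X) (_ : E ⊆ ⋃ n, F n), ∑' n, packingPre0 s (F n)

/-- The packing dimension of a set. -/
noncomputable def packingDim {X : Type*} [MetricSpace X] (E : Set X) : ℝ≥0∞ :=
  sInf {s : ℝ≥0∞ | packingMeasure s.toReal E = 0}

/-- `K` is Ahlfors regular: with `s = dimH K`, the `s`-dimensional Hausdorff measure of
`K ∩ B(x,r)` is comparable to `r^s` for `x ∈ K` and small `r`. -/
def AhlforsRegular {d : ℕ} (K : Set (EuclideanSpace ℝ (Fin d))) : Prop :=
  ∃ c₁ c₂ r₀ : ℝ, 0 < c₁ ∧ 0 < c₂ ∧ 0 < r₀ ∧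
    ∀ x ∈ K, ∀ r : ℝ, 0 < r → r < r₀ →
      ENNReal.ofReal (c₁ * r ^ (dimH K).toReal)
          ≤ μH[(dimH K).toReal] (K ∩ Metric.ball x r) ∧
        μH[(dimH K).toReal] (K ∩ Metric.ball x r)
          ≤ ENNReal.ofReal (c₂ * r ^ (dimH K).toReal)

/-- The upper local dimension of a measure at a point:
`limsup_{r → 0⁺} log μ(B(x,r)) / log r`. -/
noncomputable def upperLocalDim {X : Type*} [MetricSpace X] [MeasurableSpace X]
    (μ : Measure X) (x : X) : EReal :=
  Filter.limsup (fun r : ℝ => ENNReal.log (μ (Metric.ball x r)) / (Real.log r : EReal))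
    (nhdsWithin 0 (Set.Ioi 0))

/-- A probability measure on the subtype `↥K`, viewed as a Borel measure on `ℝ^d`. -/
noncomputable def measOn {d : ℕ} {K : Set (EuclideanSpace ℝ (Fin d))}
    (μ : ProbabilityMeasure K) : Measure (EuclideanSpace ℝ (Fin d)) :=
  (μ : Measure K).map Subtype.val

section aux

lemma packingPre_mono {X : Type*} [MetricSpace X] (s δ : ℝ) {A B : Set X} (h : A ⊆ B) :
    packingPre s δ A ≤ packingPre s δ B := by
  refine iSup_le fun P => iSup_le fun hPc => iSup_le fun hPm => iSup_le fun hPd => ?_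
  refine le_iSup_of_le P (le_iSup_of_le hPc (le_iSup_of_le (fun p hp => ?_)
    (le_iSup_of_le hPd le_rfl)))
  obtain ⟨h1, h2⟩ := hPm p hp
  exact ⟨h h1, h2⟩

lemma packingPre0_mono {X : Type*} [MetricSpace X] (s : ℝ) {A B : Set X} (h : A ⊆ B) :
    packingPre0 s A ≤ packingPre0 s B := by
  exact le_iInf fun δ => le_iInf fun hδ =>
    le_trans (iInf_le_of_le δ (iInf_le_of_le hδ le_rfl)) (packingPre_mono s δ h)

lemma card_mul_le_packingPre {X : Type*} [MetricSpace X] (s δ : ℝ) (G : Set X)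
    (ρ : ℝ) (hρ : 0 < ρ) (hρδ : ρ ≤ δ) (S : Finset X) (hSG : ↑S ⊆ G)
    (hsep : ∀ x ∈ S, ∀ y ∈ S, x ≠ y → 2 * ρ < dist x y) :
    (S.card : ℝ≥0∞) * ENNReal.ofReal ((2 * ρ) ^ s) ≤ packingPre s δ G := by
  classical
  set P : Set (X × ℝ) := (fun y => (y, ρ)) '' ↑S with hP
  have hinj : Function.Injective (fun y : X => (y, ρ)) := fun a b hab => congrArg Prod.fst hab
  have hPfin : P.Finite := (S.finite_toSet).image _
  have hcard : Nat.card P = S.card := by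
    rw [Nat.card_coe_set_eq, Set.ncard_image_of_injective _ hinj, Set.ncard_coe_finset]
  have h1 : P.Countable := hPfin.countable
  have h2 : ∀ p ∈ P, p.1 ∈ G ∧ 0 < p.2 ∧ p.2 ≤ δ := by
    rintro p ⟨y, hy, rfl⟩
    exact ⟨hSG hy, hρ, hρδ⟩
  have h3 : P.PairwiseDisjoint fun p => Metric.closedBall p.1 p.2 := by
    rintro p hp q hq hne
    obtain ⟨y, hy', rfl⟩ := hp
    obtain ⟨z, hz', rfl⟩ := hq
    have hyz : y ≠ z := fun h => hne (by simp [h])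
    have := hsep _ hy' _ hz' hyz
    exact Metric.closedBall_disjoint_closedBall (by simpa using (by linarith : ρ + ρ < dist y z))
  have hsum : ∑' p : P, ENNReal.ofReal ((2 * (p : X × ℝ).2) ^ s)
      = (S.card : ℝ≥0∞) * ENNReal.ofReal ((2 * ρ) ^ s) := by
    have : ∀ p : P, ENNReal.ofReal ((2 * (p : X × ℝ).2) ^ s) = ENNReal.ofReal ((2 * ρ) ^ s) := by
      rintro ⟨⟨y, r⟩, ⟨y', hy', h⟩⟩
      cases h
      rfl
    rw [tsum_congr this]
    haveI : Fintype P := hPfin.fintype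
    rw [tsum_fintype, Finset.sum_const, ← hcard, Nat.card_eq_fintype_card, Finset.card_univ,
      nsmul_eq_mul]
  rw [← hsum]
  exact le_iSup_of_le P (le_iSup_of_le h1 (le_iSup_of_le h2 (le_iSup_of_le h3 le_rfl)))

lemma exists_maximal_separated {X : Type*} [MetricSpace X] (G : Set X) (ρ : ℝ) (hρ : 0 < ρ)
    (N : ℕ)
    (hbound : ∀ S : Finset X, ↑S ⊆ G → (∀ x ∈ S, ∀ y ∈ S, x ≠ y → 2 * ρ < dist x y) →
      S.card ≤ N) :
    ∃ S : Finset X, ↑S ⊆ G ∧ (∀ x ∈ S, ∀ y ∈ S, x ≠ y → 2 * ρ < dist x y) ∧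
      ∀ x ∈ G, ∃ y ∈ S, dist x y ≤ 2 * ρ := by
  classical
  by_contra hcon
  push_neg at hcon
  have key : ∀ m : ℕ, ∃ S : Finset X, ↑S ⊆ G ∧
      (∀ x ∈ S, ∀ y ∈ S, x ≠ y → 2 * ρ < dist x y) ∧ S.card = m := by
    intro m
    induction m with
    | zero => exact ⟨∅, by simp, by simp, by simp⟩
    | succ m ih =>
      obtain ⟨S, hS1, hS2, hS3⟩ := ih
      obtain ⟨x, hxG, hx⟩ := hcon S hS1 hS2
      have hxS : x ∉ S := by
        intro hmem
        have := hx x hmem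
        simp only [dist_self] at this
        linarith
      refine ⟨insert x S, ?_, ?_, by rw [Finset.card_insert_of_notMem hxS, hS3]⟩
      · intro z hz
        simp only [Finset.coe_insert, Set.mem_insert_iff] at hz
        rcases hz with rfl | hz
        · exact hxG
        · exact hS1 hz
      · intro a ha b hb hab
        simp only [Finset.mem_insert] at ha hb
        rcases ha with rfl | ha <;> rcases hb with rfl | hb
        · exact absurd rfl hab
        · exact hx b hb
        · rw [dist_comm]; exact hx a ha
        · exact hS2 a ha b hb hab
  obtain ⟨S, hS1, hS2, hS3⟩ := key (N + 1)
  have := hbound S hS1 hS2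
  omega

lemma coe_inv_sq_eq (k : ℕ) :
    (((k : ℝ≥0∞) + 1) ^ 2)⁻¹ = ENNReal.ofReal ((((k : ℝ) + 1) ^ 2)⁻¹) := by
  have hpos : (0:ℝ) < ((k : ℝ) + 1) ^ 2 := by positivity
  rw [ENNReal.ofReal_inv_of_pos hpos, ENNReal.ofReal_pow (by positivity)]
  congr 2
  rw [ENNReal.ofReal_add (by positivity) zero_le_one]
  simp

lemma Z_ne_top : (∑' k : ℕ, (((k : ℝ≥0∞) + 1) ^ 2)⁻¹) ≠ ⊤ := by
  have hs : Summable (fun k : ℕ => (((k : ℝ) + 1) ^ 2)⁻¹) := by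
    have h2 : Summable (fun n : ℕ => 1 / (n : ℝ) ^ 2) :=
      Real.summable_one_div_nat_pow.mpr one_lt_two
    have := (summable_nat_add_iff 1).mpr h2
    refine this.congr fun k => ?_
    push_cast
    rw [one_div]
  rw [tsum_congr coe_inv_sq_eq, ← ENNReal.ofReal_tsum_of_nonneg (fun k => by positivity) hs]
  exact ENNReal.ofReal_ne_top

lemma pow_half_le {r : ℝ} (h0 : 0 < r) (h1 : r < 1) :
    (2⁻¹ : ℝ) ^ (⌈Real.logb 2 (1/r)⌉₊ + 2) ≤ r / 4 := by
  have hinv1 : 1 ≤ 1 / r := by rw [le_div_iff₀ h0]; linarith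
  set s : ℝ := Real.logb 2 (1/r) with hsdef
  have hs0 : 0 ≤ s := Real.logb_nonneg one_lt_two hinv1
  set k : ℕ := ⌈s⌉₊ + 2 with hk
  have hk_lb : s + 2 ≤ (k : ℝ) := by
    have := Nat.le_ceil s
    push_cast [hk]
    linarith
  have h2s : (2:ℝ) ^ s = 1 / r := Real.rpow_logb (by norm_num) (by norm_num) (by positivity)
  have hpow_eq : (2⁻¹ : ℝ) ^ k = (2:ℝ) ^ (-(k:ℝ)) := by
    rw [Real.rpow_neg (by norm_num : (0:ℝ) ≤ 2), Real.rpow_natCast, ← inv_pow]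
  rw [hpow_eq]
  have hle : (2:ℝ) ^ (-(k:ℝ)) ≤ (2:ℝ) ^ (-(s + 2)) :=
    Real.rpow_le_rpow_of_exponent_le (by norm_num) (by linarith)
  have heq : (2:ℝ) ^ (-(s + 2)) = r / 4 := by
    rw [Real.rpow_neg (by norm_num), Real.rpow_add (by norm_num), h2s]
    rw [show (2:ℝ) = ((2:ℕ):ℝ) by norm_num, Real.rpow_natCast]
    field_simp
    norm_num
  linarith

end aux

lemma real_key (a α ε : ℝ) (ha : 0 < a) (hα : 0 < α) (hε : 0 < ε) :
    ∃ r₂ : ℝ, 0 < r₂ ∧ r₂ ≤ 1 ∧ ∀ r : ℝ, 0 < r → r < r₂ →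
      r ^ (α + ε) ≤ a * ((((⌈Real.logb 2 (1/r)⌉₊ + 2 : ℕ) : ℝ) + 1) ^ 2)⁻¹ *
        (2 * (2⁻¹ : ℝ) ^ (⌈Real.logb 2 (1/r)⌉₊ + 2)) ^ α := by
  set M : ℝ := 8 / ε + 4 with hM
  have hMpos : 0 < M := by positivity
  have h4pos : (0:ℝ) < (4:ℝ) ^ α := Real.rpow_pos_of_pos (by norm_num) α
  set B : ℝ := a / (M ^ 2 * (4:ℝ) ^ α) with hB
  have hBpos : 0 < B := by positivity
  refine ⟨min 1 (B ^ (2 / ε)), lt_min one_pos (Real.rpow_pos_of_pos hBpos _), min_le_left _ _,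
    fun r hr hrlt => ?_⟩
  have hr1 : r < 1 := lt_of_lt_of_le hrlt (min_le_left _ _)
  have hinv1 : 1 ≤ 1 / r := by
    rw [le_div_iff₀ hr]; linarith
  set s : ℝ := Real.logb 2 (1/r) with hsdef
  have hs0 : 0 ≤ s := Real.logb_nonneg one_lt_two hinv1
  set k : ℕ := ⌈s⌉₊ + 2 with hk
  -- k ≤ s + 3
  have hk_ub : (k : ℝ) ≤ s + 3 := by
    have := Nat.ceil_lt_add_one hs0
    push_cast [hk]
    linarith
  have hk_lb : s + 2 ≤ (k : ℝ) := by
    have := Nat.le_ceil s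
    push_cast [hk]
    linarith
  -- 2⁻¹ ^ k ≥ r / 8
  have h2s : (2:ℝ) ^ s = 1 / r := Real.rpow_logb (by norm_num) (by norm_num) (by positivity)
  have hpow_eq : (2⁻¹ : ℝ) ^ k = (2:ℝ) ^ (-(k:ℝ)) := by
    rw [Real.rpow_neg (by norm_num : (0:ℝ) ≤ 2), Real.rpow_natCast, ← inv_pow]
  have h2k : r / 8 ≤ (2⁻¹ : ℝ) ^ k := by
    rw [hpow_eq]
    have h1 : (2:ℝ) ^ (-(s + 3)) ≤ (2:ℝ) ^ (-(k:ℝ)) :=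
      Real.rpow_le_rpow_of_exponent_le (by norm_num) (by linarith)
    have h2 : (2:ℝ) ^ (-(s + 3)) = r / 8 := by
      rw [Real.rpow_neg (by norm_num), Real.rpow_add (by norm_num), h2s]
      rw [show (3:ℝ) = ((3:ℕ):ℝ) by norm_num, Real.rpow_natCast]
      field_simp
      norm_num
    linarith
  -- log bound: s ≤ (8/ε) * (1/r)^(ε/4)
  have hrpow_pos : (0:ℝ) < (1/r) ^ (ε/4) := Real.rpow_pos_of_pos (by positivity) _
  have hone : (1:ℝ) ≤ (1/r) ^ (ε/4) := by
    calc (1:ℝ) = 1 ^ (ε/4) := (Real.one_rpow _).symm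
    _ ≤ (1/r) ^ (ε/4) := Real.rpow_le_rpow (by norm_num) hinv1 (by positivity)
  have hlog : s ≤ (8/ε) * (1/r) ^ (ε/4) := by
    have hx : (0:ℝ) < 1 / r := by positivity
    have h1 : Real.log ((1/r) ^ (ε/4)) = (ε/4) * Real.log (1/r) := Real.log_rpow hx _
    have h2 : Real.log ((1/r) ^ (ε/4)) ≤ (1/r) ^ (ε/4) - 1 :=
      Real.log_le_sub_one_of_pos hrpow_pos
    have h3 : Real.log (1/r) ≤ (4/ε) * (1/r) ^ (ε/4) := by
      have h4 : (ε/4) * Real.log (1/r) ≤ (1/r) ^ (ε/4) := by linarith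
      calc Real.log (1/r) = (4/ε) * ((ε/4) * Real.log (1/r)) := by field_simp
        _ ≤ (4/ε) * (1/r) ^ (ε/4) := mul_le_mul_of_nonneg_left h4 (by positivity)
    have hlog2 : (0.6931471803 : ℝ) < Real.log 2 := Real.log_two_gt_d9
    have hlognn : 0 ≤ Real.log (1/r) := Real.log_nonneg hinv1
    have hs_eq : s = Real.log (1/r) / Real.log 2 := by
      rw [hsdef, Real.logb]
    rw [hs_eq]
    rw [div_le_iff₀ (by linarith : (0:ℝ) < Real.log 2)]
    have he1 : (8/ε) * (1/r) ^ (ε/4) * 0.5 = (4/ε) * (1/r) ^ (ε/4) := by ring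
    have he2 : (8/ε) * (1/r) ^ (ε/4) * 0.5 ≤ (8/ε) * (1/r) ^ (ε/4) * Real.log 2 :=
      mul_le_mul_of_nonneg_left (by linarith) (by positivity)
    linarith
  -- (k+1)^2 ≤ M^2 * (1/r)^(ε/2)
  have hsq : ((k:ℝ) + 1) ^ 2 ≤ M ^ 2 * (1/r) ^ (ε/2) := by
    have h1 : (k:ℝ) + 1 ≤ M * (1/r) ^ (ε/4) := by
      have : s + 4 ≤ (8/ε) * (1/r) ^ (ε/4) + 4 * (1/r) ^ (ε/4) := by nlinarith
      rw [hM]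
      nlinarith
    have h2 : ((1/r) ^ (ε/4)) ^ 2 = (1/r) ^ (ε/2) := by
      rw [← Real.rpow_natCast ((1/r) ^ (ε/4)) 2, ← Real.rpow_mul (by positivity)]
      norm_num
      ring_nf
    calc ((k:ℝ) + 1) ^ 2 ≤ (M * (1/r) ^ (ε/4)) ^ 2 := by nlinarith [hrpow_pos, hk_lb]
      _ = M ^ 2 * (1/r) ^ (ε/2) := by rw [mul_pow, h2]
  have hinv_r : ((1/r) ^ (ε/2))⁻¹ = r ^ (ε/2) := by
    rw [one_div, Real.inv_rpow hr.le, inv_inv]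
  have hkinv : (M ^ 2 * (1/r) ^ (ε/2))⁻¹ ≤ (((k:ℝ) + 1) ^ 2)⁻¹ :=
    inv_anti₀ (by positivity) hsq
  have hkinv2 : (M ^ 2)⁻¹ * r ^ (ε/2) ≤ (((k:ℝ) + 1) ^ 2)⁻¹ := by
    rw [mul_inv, hinv_r] at hkinv
    exact hkinv
  have hball : (r/4) ^ α ≤ (2 * (2⁻¹:ℝ) ^ k) ^ α :=
    Real.rpow_le_rpow (by positivity) (by linarith) hα.le
  have hr4 : (r/4) ^ α = r ^ α * (((4:ℝ) ^ α))⁻¹ := by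
    rw [Real.div_rpow hr.le (by norm_num), div_eq_mul_inv]
  have hrB : r ^ (ε/2) ≤ B := by
    have hrle : r ≤ B ^ (2/ε) := le_of_lt (lt_of_lt_of_le hrlt (min_le_right _ _))
    calc r ^ (ε/2) ≤ (B ^ (2/ε)) ^ (ε/2) := Real.rpow_le_rpow hr.le hrle (by positivity)
      _ = B := by
        rw [← Real.rpow_mul hBpos.le, show 2/ε*(ε/2) = 1 by field_simp, Real.rpow_one]
  have key1 : a * ((M ^ 2)⁻¹ * r ^ (ε/2)) * ((r/4) ^ α)
      ≤ a * (((k:ℝ) + 1) ^ 2)⁻¹ * (2 * (2⁻¹:ℝ) ^ k) ^ α :=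
    mul_le_mul (mul_le_mul_of_nonneg_left hkinv2 ha.le) hball (by positivity) (by positivity)
  have key2 : a * ((M ^ 2)⁻¹ * r ^ (ε/2)) * ((r/4) ^ α) = B * r ^ (ε/2) * (r ^ α) := by
    rw [hr4, hB]
    field_simp
  have key3 : r ^ (α + ε) ≤ B * r ^ (ε/2) * r ^ α := by
    have e1 : r ^ (α + ε) = r ^ α * (r ^ (ε/2) * r ^ (ε/2)) := by
      rw [show α + ε = α + (ε/2 + ε/2) by ring, Real.rpow_add hr, Real.rpow_add hr]
    rw [e1]
    have h5 : r ^ (ε/2) * r ^ (ε/2) ≤ B * r ^ (ε/2) :=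
      mul_le_mul_of_nonneg_right hrB (Real.rpow_nonneg hr.le _)
    have h6 := mul_le_mul_of_nonneg_left h5 (Real.rpow_nonneg hr.le α)
    calc r ^ α * (r ^ (ε/2) * r ^ (ε/2)) ≤ r ^ α * (B * r ^ (ε/2)) := h6
      _ = B * r ^ (ε/2) * r ^ α := by ring
  linarith

lemma upperLocalDim_le_of_lb {X : Type*} [MetricSpace X] [MeasurableSpace X]
    (ν : Measure X) (x : X) (α : ℝ) (hν : ν univ ≤ 1)
    (h : ∀ β : ℝ, α < β → ∀ᶠ r in 𝓝[>] (0:ℝ),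
      r < 1 ∧ ENNReal.ofReal (r ^ β) ≤ ν (Metric.ball x r)) :
    upperLocalDim ν x ≤ (α : EReal) := by
  suffices H : ∀ β : ℝ, α < β → upperLocalDim ν x ≤ (β : EReal) by
    by_contra hcon
    push_neg at hcon
    obtain ⟨z, hz1, hz2⟩ := exists_between hcon
    have hz_top : z ≠ ⊤ := (hz2.trans_le le_top).ne
    have hz_bot : z ≠ ⊥ := ((EReal.bot_lt_coe α).trans hz1).ne'
    have hzc : ((z.toReal : ℝ) : EReal) = z := EReal.coe_toReal hz_top hz_bot
    have hαt : α < z.toReal := by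
      rw [← hzc] at hz1
      exact_mod_cast hz1
    exact absurd (H z.toReal hαt) (by rw [hzc]; exact not_le.mpr hz2)
  intro β hβ
  unfold upperLocalDim
  have hev : ∀ᶠ r in 𝓝[>] (0:ℝ),
      ENNReal.log (ν (Metric.ball x r)) / (Real.log r : EReal) ≤ (β : EReal) := by
    filter_upwards [h β hβ, self_mem_nhdsWithin] with r hr hrpos
    have hr0 : (0:ℝ) < r := hrpos
    have hlogr_neg : Real.log r < 0 := Real.log_neg hr0 hr.1
    have hlb : ((β * Real.log r : ℝ) : EReal) ≤ ENNReal.log (ν (Metric.ball x r)) := by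
      have h2 := ENNReal.log_monotone hr.2
      rwa [ENNReal.log_ofReal_of_pos (Real.rpow_pos_of_pos hr0 β), Real.log_rpow hr0] at h2
    have hub : ENNReal.log (ν (Metric.ball x r)) ≤ (0 : EReal) := by
      have h1 : ν (Metric.ball x r) ≤ 1 := le_trans (measure_mono (subset_univ _)) hν
      have h2 := ENNReal.log_monotone h1
      rwa [ENNReal.log_one] at h2
    have hne_bot : ENNReal.log (ν (Metric.ball x r)) ≠ ⊥ := by
      intro hL
      rw [hL] at hlb
      exact absurd hlb (not_le.mpr (EReal.bot_lt_coe _))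
    have hne_top : ENNReal.log (ν (Metric.ball x r)) ≠ ⊤ := by
      intro hL
      rw [hL] at hub
      exact absurd hub (by simp)
    have hl : ((ENNReal.log (ν (Metric.ball x r))).toReal : EReal)
        = ENNReal.log (ν (Metric.ball x r)) := EReal.coe_toReal hne_top hne_bot
    rw [← hl, ← EReal.coe_div, EReal.coe_le_coe_iff]
    rw [div_le_iff_of_neg hlogr_neg]
    have : β * Real.log r ≤ (ENNReal.log (ν (Metric.ball x r))).toReal := by
      rw [← EReal.coe_le_coe_iff, hl]
      exact hlb
    linarith [this]
  calc Filter.limsup (fun r : ℝ => ENNReal.log (ν (Metric.ball x r)) / (Real.log r : EReal))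
        (𝓝[>] (0:ℝ)) ≤ Filter.limsup (fun _ : ℝ => (β : EReal)) (𝓝[>] (0:ℝ)) :=
      Filter.limsup_le_limsup hev
    _ = (β : EReal) := Filter.limsup_const _

theorem exists_measure_upperLocalDim_le
    {d : ℕ} (K : Set (EuclideanSpace ℝ (Fin d))) (hK : IsCompact K) (hne : K.Nonempty)
    (E : Set (EuclideanSpace ℝ (Fin d))) (hEK : E ⊆ K) (hE : IsCompact E)
    (α : ℝ) (hα : 0 < α) (hfin : packingMeasure α E < ⊤) :
    ∃ μ : ProbabilityMeasure K, ∀ x ∈ E, upperLocalDim (measOn μ) x ≤ (α : EReal) := by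
  classical
  obtain ⟨x₀, hx₀⟩ := hne
  rw [packingMeasure, iInf_lt_iff] at hfin
  obtain ⟨F, hF⟩ := hfin
  rw [iInf_lt_iff] at hF
  obtain ⟨hFcov, hFsum⟩ := hF
  set G : ℕ → Set (EuclideanSpace ℝ (Fin d)) := fun n => F n ∩ E with hG
  have hGsub : ∀ n, G n ⊆ E := fun n => inter_subset_right
  have hGK : ∀ n, G n ⊆ K := fun n => (hGsub n).trans hEK
  have hGcov : ∀ x ∈ E, ∃ n, x ∈ G n := by
    intro x hx
    obtain ⟨n, hn⟩ := mem_iUnion.mp (hFcov hx)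
    exact ⟨n, hn, hx⟩
  have hGfin : ∀ n, packingPre0 α (G n) < ⊤ := fun n =>
    lt_of_le_of_lt (packingPre0_mono α inter_subset_left)
      (lt_of_le_of_lt (ENNReal.le_tsum n) hFsum)
  have hδex : ∀ n, ∃ δ : ℝ, 0 < δ ∧ packingPre α δ (G n) < ⊤ := by
    intro n
    have h := hGfin n
    rw [packingPre0, iInf_lt_iff] at h
    obtain ⟨δ, hδ⟩ := h
    rw [iInf_lt_iff] at hδ
    obtain ⟨hδ0, hδlt⟩ := hδ
    exact ⟨δ, hδ0, hδlt⟩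
  choose δ hδ0 hδfin using hδex
  set C : ℕ → ℝ≥0∞ := fun n => max (packingPre α (δ n) (G n)) 1 with hC
  have hC1 : ∀ n, 1 ≤ C n := fun n => le_max_right _ _
  have hC0 : ∀ n, C n ≠ 0 := fun n h => by simpa [h] using hC1 n
  have hCtop : ∀ n, C n ≠ ⊤ := fun n => (max_lt (hδfin n) ENNReal.one_lt_top).ne
  have hCmax : ∀ n, packingPre α (δ n) (G n) ≤ C n := fun n => le_max_left _ _
  -- maximal separated sets
  have hSex : ∀ n k, ∃ S : Finset (EuclideanSpace ℝ (Fin d)), ↑S ⊆ G n ∧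
      ((2⁻¹:ℝ)^k ≤ δ n → ((∀ x ∈ G n, ∃ y ∈ S, dist x y ≤ 2 * (2⁻¹:ℝ)^k) ∧
        (S.card : ℝ≥0∞) * ENNReal.ofReal ((2 * (2⁻¹:ℝ)^k) ^ α) ≤ C n)) := by
    intro n k
    by_cases hcond : (2⁻¹:ℝ)^k ≤ δ n
    · have hρ : (0:ℝ) < (2⁻¹:ℝ)^k := by positivity
      set c : ℝ≥0∞ := ENNReal.ofReal ((2 * (2⁻¹:ℝ)^k) ^ α) with hc
      have hc0 : c ≠ 0 := by
        rw [hc]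
        simp only [ne_eq, ENNReal.ofReal_eq_zero, not_le]
        positivity
      have hctop : c ≠ ⊤ := ENNReal.ofReal_ne_top
      set N : ℕ := ⌈(C n / c).toReal⌉₊ with hN
      have hbound : ∀ S : Finset (EuclideanSpace ℝ (Fin d)), ↑S ⊆ G n →
          (∀ x ∈ S, ∀ y ∈ S, x ≠ y → 2 * (2⁻¹:ℝ)^k < dist x y) → S.card ≤ N := by
        intro S h1 h2
        have hle : (S.card : ℝ≥0∞) * c ≤ C n :=
          le_trans (card_mul_le_packingPre α (δ n) (G n) _ hρ hcond S h1 h2) (hCmax n)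
        have hcards : (S.card : ℝ≥0∞) ≤ C n / c :=
          (ENNReal.le_div_iff_mul_le (Or.inl hc0) (Or.inl hctop)).mpr hle
        have hfin2 : C n / c ≠ ⊤ := (ENNReal.div_lt_top (hCtop n) hc0).ne
        have h3 := ENNReal.toReal_mono hfin2 hcards
        rw [ENNReal.toReal_natCast] at h3
        have h4 := le_trans h3 (Nat.le_ceil _)
        exact_mod_cast h4
      obtain ⟨S, hS1, hS2, hS3⟩ := exists_maximal_separated (G n) _ hρ N hbound
      exact ⟨S, hS1, fun _ => ⟨hS3,
        le_trans (card_mul_le_packingPre α (δ n) (G n) _ hρ hcond S hS1 hS2) (hCmax n)⟩⟩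
    · exact ⟨∅, by simp, fun h => absurd h hcond⟩
  choose S hS1 hS2 using hSex
  -- the measures
  set ν : ℕ → ℕ → Measure ↥K := fun n k =>
    if h : (S n k).Nonempty then
      ((S n k).card : ℝ≥0∞)⁻¹ • ∑ y ∈ (S n k).attach,
        Measure.dirac (⟨y.1, hGK n (hS1 n k (Finset.mem_coe.mpr y.2))⟩ : ↥K)
    else Measure.dirac (⟨x₀, hx₀⟩ : ↥K) with hν
  have hν1 : ∀ n k, ν n k univ = 1 := by
    intro n k
    simp only [hν]
    by_cases h : (S n k).Nonempty
    · rw [dif_pos h, Measure.smul_apply, smul_eq_mul, Measure.finset_sum_apply]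
      simp only [measure_univ]
      rw [Finset.sum_const, Finset.card_attach, nsmul_eq_mul, mul_one]
      exact ENNReal.inv_mul_cancel (by exact_mod_cast Finset.card_ne_zero.mpr h)
        (ENNReal.natCast_ne_top _)
    · rw [dif_neg h]
      exact measure_univ
  set w : ℕ × ℕ → ℝ≥0∞ := fun p => (2:ℝ≥0∞)⁻¹ ^ p.1 * (((p.2 : ℝ≥0∞) + 1) ^ 2)⁻¹ with hw
  set μ₀ : Measure ↥K := Measure.sum (fun p : ℕ × ℕ => w p • ν p.1 p.2) with hμ₀
  set Wv : ℝ≥0∞ := ∑' p : ℕ × ℕ, w p with hWv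
  have hμ₀univ : μ₀ univ = Wv := by
    rw [hμ₀, Measure.sum_apply _ MeasurableSet.univ, hWv]
    refine tsum_congr fun p => ?_
    rw [Measure.smul_apply, smul_eq_mul, hν1, mul_one]
  have hWtop : Wv ≠ ⊤ := by
    rw [hWv, hw, ENNReal.tsum_prod']
    have h1 : ∀ n : ℕ, (∑' k : ℕ, (2:ℝ≥0∞)⁻¹ ^ n * (((k : ℝ≥0∞) + 1) ^ 2)⁻¹)
        = (2:ℝ≥0∞)⁻¹ ^ n * ∑' k : ℕ, (((k : ℝ≥0∞) + 1) ^ 2)⁻¹ := fun n =>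
      ENNReal.tsum_mul_left
    simp only []
    rw [tsum_congr h1, ENNReal.tsum_mul_right, ENNReal.tsum_geometric]
    refine ENNReal.mul_ne_top ?_ Z_ne_top
    rw [ENNReal.one_sub_inv_two]
    simp
  have hW1 : 1 ≤ Wv := by
    have h := ENNReal.le_tsum (f := w) (0, 0)
    simpa [hw] using h
  have hW0 : Wv ≠ 0 := fun h => by simp [h] at hW1
  have hprob : IsProbabilityMeasure (Wv⁻¹ • μ₀) :=
    ⟨by rw [Measure.smul_apply, smul_eq_mul, hμ₀univ]; exact ENNReal.inv_mul_cancel hW0 hWtop⟩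
  refine ⟨⟨Wv⁻¹ • μ₀, hprob⟩, ?_⟩
  intro x hxE
  have hmap : ∀ s : Set (EuclideanSpace ℝ (Fin d)), MeasurableSet s →
      measOn (⟨Wv⁻¹ • μ₀, hprob⟩ : ProbabilityMeasure K) s
        = (Wv⁻¹ • μ₀) (Subtype.val ⁻¹' s) := by
    intro s hs
    show Measure.map Subtype.val (Wv⁻¹ • μ₀) s = _
    exact Measure.map_apply measurable_subtype_coe hs
  apply upperLocalDim_le_of_lb
  · rw [hmap univ MeasurableSet.univ]
    simp only [preimage_univ]
    exact le_of_eq hprob.measure_univ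
  · intro β hβ
    obtain ⟨n, hxG⟩ := hGcov x hxE
    set ε : ℝ := β - α with hεdef
    have hεpos : 0 < ε := by rw [hεdef]; linarith
    set A : ℝ≥0∞ := Wv⁻¹ * (2:ℝ≥0∞)⁻¹ ^ n * (C n)⁻¹ with hA
    have hA0 : A ≠ 0 := by
      rw [hA]
      refine mul_ne_zero (mul_ne_zero ?_ ?_) ?_
      · exact ENNReal.inv_ne_zero.mpr hWtop
      · exact pow_ne_zero _ (ENNReal.inv_ne_zero.mpr ENNReal.ofNat_ne_top)
      · exact ENNReal.inv_ne_zero.mpr (hCtop n)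
    have hAtop : A ≠ ⊤ := by
      rw [hA]
      refine ENNReal.mul_ne_top (ENNReal.mul_ne_top ?_ ?_) ?_
      · exact ENNReal.inv_ne_top.mpr hW0
      · exact ENNReal.pow_ne_top (by simp)
      · exact ENNReal.inv_ne_top.mpr (hC0 n)
    have ha : 0 < A.toReal := ENNReal.toReal_pos hA0 hAtop
    obtain ⟨r₂, hr₂0, hr₂1, hkey⟩ := real_key A.toReal α ε ha hα hεpos
    have hr₃ : (0:ℝ) < min r₂ (4 * δ n) := lt_min hr₂0 (by linarith [hδ0 n])
    filter_upwards [Ioo_mem_nhdsGT hr₃] with r hr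
    obtain ⟨hr0, hrlt⟩ := hr
    have hrr₂ : r < r₂ := lt_of_lt_of_le hrlt (min_le_left _ _)
    have hr1 : r < 1 := lt_of_lt_of_le hrr₂ hr₂1
    refine ⟨hr1, ?_⟩
    set k : ℕ := ⌈Real.logb 2 (1/r)⌉₊ + 2 with hkdef
    have hhalf : (2⁻¹:ℝ)^k ≤ r / 4 := pow_half_le hr0 hr1
    have hcond : (2⁻¹:ℝ)^k ≤ δ n := by
      have h4 : r < 4 * δ n := lt_of_lt_of_le hrlt (min_le_right _ _)
      linarith
    obtain ⟨hcover, hcard⟩ := hS2 n k hcond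
    obtain ⟨y, hyS, hydist⟩ := hcover x hxG
    have hρpos : (0:ℝ) < (2⁻¹:ℝ)^k := by positivity
    have hyball : y ∈ ball x r := by
      rw [mem_ball, dist_comm]
      linarith
    have hm : MeasurableSet (Subtype.val ⁻¹' ball x r : Set ↥K) :=
      measurable_subtype_coe measurableSet_ball
    -- lower bound for ν n k
    have hν_lb : (((S n k).card : ℝ≥0∞))⁻¹ ≤ ν n k (Subtype.val ⁻¹' ball x r) := by
      simp only [hν]
      rw [dif_pos ⟨y, hyS⟩, Measure.smul_apply, smul_eq_mul, Measure.finset_sum_apply]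
      have hy' : (⟨y, hyS⟩ : {a // a ∈ S n k}) ∈ (S n k).attach := Finset.mem_attach _ _
      have hterm : (1:ℝ≥0∞) ≤ ∑ z ∈ (S n k).attach,
          Measure.dirac (⟨z.1, hGK n (hS1 n k (Finset.mem_coe.mpr z.2))⟩ : ↥K)
            (Subtype.val ⁻¹' ball x r) := by
        refine le_trans ?_ (Finset.single_le_sum (fun _ _ => zero_le) hy')
        rw [Measure.dirac_apply' _ hm, Set.indicator_of_mem (by exact hyball)]
        rfl
      calc (((S n k).card : ℝ≥0∞))⁻¹ = (((S n k).card : ℝ≥0∞))⁻¹ * 1 := (mul_one _).symm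
        _ ≤ _ := mul_le_mul_right hterm _
    set c : ℝ≥0∞ := ENNReal.ofReal ((2 * (2⁻¹:ℝ)^k) ^ α) with hc
    have hcard_inv : c * (C n)⁻¹ ≤ (((S n k).card : ℝ≥0∞))⁻¹ := by
      rw [ENNReal.le_inv_iff_mul_le]
      have h2 := mul_le_mul_left hcard ((C n)⁻¹)
      rw [ENNReal.mul_inv_cancel (hC0 n) (hCtop n)] at h2
      calc c * (C n)⁻¹ * ((S n k).card : ℝ≥0∞)
          = ((S n k).card : ℝ≥0∞) * c * (C n)⁻¹ := by ring
        _ ≤ 1 := h2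
    -- assemble
    have hsum_lb : w (n, k) * ν n k (Subtype.val ⁻¹' ball x r)
        ≤ μ₀ (Subtype.val ⁻¹' ball x r) := by
      rw [hμ₀, Measure.sum_apply _ hm]
      have h5 := ENNReal.le_tsum
        (f := fun p : ℕ × ℕ => (w p • ν p.1 p.2) (Subtype.val ⁻¹' ball x r)) (n, k)
      rw [Measure.smul_apply, smul_eq_mul] at h5
      exact h5
    have hchain : A * (((k : ℝ≥0∞) + 1) ^ 2)⁻¹ * c
        ≤ measOn (⟨Wv⁻¹ • μ₀, hprob⟩ : ProbabilityMeasure K) (ball x r) := by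
      rw [hmap _ measurableSet_ball, Measure.smul_apply, smul_eq_mul]
      have e1 : A * (((k : ℝ≥0∞) + 1) ^ 2)⁻¹ * c
          = Wv⁻¹ * (w (n, k) * (c * (C n)⁻¹)) := by
        rw [hA, hw]
        ring
      rw [e1]
      refine mul_le_mul_right ?_ _
      calc w (n, k) * (c * (C n)⁻¹) ≤ w (n, k) * (((S n k).card : ℝ≥0∞))⁻¹ :=
          mul_le_mul_right hcard_inv _
        _ ≤ w (n, k) * ν n k (Subtype.val ⁻¹' ball x r) := mul_le_mul_right hν_lb _
        _ ≤ _ := hsum_lb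
    refine le_trans ?_ hchain
    have e2 : A * (((k : ℝ≥0∞) + 1) ^ 2)⁻¹ * c
        = ENNReal.ofReal (A.toReal * ((((k:ℕ):ℝ) + 1) ^ 2)⁻¹ * ((2 * (2⁻¹:ℝ)^k) ^ α)) := by
      rw [ENNReal.ofReal_mul (by positivity), ENNReal.ofReal_mul (by positivity)]
      rw [ENNReal.ofReal_toReal hAtop, ← coe_inv_sq_eq, hc]
    rw [e2]
    apply ENNReal.ofReal_le_ofReal
    have hβeq : β = α + ε := by rw [hεdef]; ring
    rw [hβeq]
    exact hkey r hr0 hrr₂
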